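/- Let (Ω,F,P) be a probability space, (E,B) a measurable space, X : Ω → E a measurable map, and f, g : E → ℝ measurable functions with E|f(X)| < ∞ and E|g(X)| < ∞. Let U, V ∈ F be events with V ⊆ U, and for each C ∈ B define the event D(C) = ({X ∈ C} ∩ U) ∪ ({X ∉ C} ∩ V) and the quantity ψ(C) = E[ f(X)·1_{D(C)} + g(X)·1_{D(C)^c} ]. Then the set C* = {x ∈ E : f(x) − g(x) ≥ 0} belongs to B and satisfies ψ(C*) = sup_{C ∈ B} ψ(C). -/

import Mathlib

open MeasureTheory

/-- The effective stopping event of a player using stopping set `C`, when the other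
players' declarations produce the events `U = Π(D^1,…,Ω,…,D^p)` and
`V = Π(D^1,…,∅,…,D^p)`: `D(C) = ({X ∈ C} ∩ U) ∪ ({X ∉ C} ∩ V)`. -/
def stopEvent {Ω E : Type*} (X : Ω → E) (U V : Set Ω) (C : Set E) : Set Ω :=
  (X ⁻¹' C ∩ U) ∪ ((X ⁻¹' C)ᶜ ∩ V)

/-- The expected payoff `ψ(C) = E[f(X)·1_{D(C)} + g(X)·1_{D(C)ᶜ}]`. -/
noncomputable def stopPayoff {Ω E : Type*} [MeasurableSpace Ω] (P : Measure Ω)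
    (X : Ω → E) (f g : E → ℝ) (U V : Set Ω) (C : Set E) : ℝ :=
  ∫ ω, ((stopEvent X U V C).indicator (fun ω' => f (X ω')) ω +
        ((stopEvent X U V C)ᶜ).indicator (fun ω' => g (X ω')) ω) ∂P

lemma stopEvent_measurable {Ω E : Type*} [MeasurableSpace Ω] [MeasurableSpace E]
    {X : Ω → E} (hX : Measurable X) {U V : Set Ω} (hU : MeasurableSet U)
    (hV : MeasurableSet V) {C : Set E} (hC : MeasurableSet C) :
    MeasurableSet (stopEvent X U V C) :=
  ((hX hC).inter hU).union ((hX hC).compl.inter hV)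

lemma stopEvent_eq {Ω E : Type*} {X : Ω → E} {U V : Set Ω} (hVU : V ⊆ U) (C : Set E) :
    stopEvent X U V C = V ∪ (X ⁻¹' C ∩ (U \ V)) := by
  ext ω
  have := @hVU ω
  simp only [stopEvent, Set.mem_union, Set.mem_inter_iff, Set.mem_compl_iff,
    Set.mem_preimage, Set.mem_diff]
  tauto

lemma stopPayoff_eq {Ω E : Type*} [MeasurableSpace Ω] [MeasurableSpace E]
    (P : Measure Ω) {X : Ω → E} (hX : Measurable X)
    {f g : E → ℝ} (hf : Measurable f) (hg : Measurable g)
    (hfint : Integrable (fun ω => f (X ω)) P) (hgint : Integrable (fun ω => g (X ω)) P)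
    {U V : Set Ω} (hU : MeasurableSet U) (hV : MeasurableSet V)
    {C : Set E} (hC : MeasurableSet C) :
    stopPayoff P X f g U V C
      = (∫ ω, g (X ω) ∂P) + ∫ ω in stopEvent X U V C, (f (X ω) - g (X ω)) ∂P := by
  have hD : MeasurableSet (stopEvent X U V C) := stopEvent_measurable hX hU hV hC
  have hpt : ∀ ω, (stopEvent X U V C).indicator (fun ω' => f (X ω')) ω +
        ((stopEvent X U V C)ᶜ).indicator (fun ω' => g (X ω')) ω
      = g (X ω) + (stopEvent X U V C).indicator (fun ω' => f (X ω') - g (X ω')) ω := by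
    intro ω
    by_cases h : ω ∈ stopEvent X U V C <;>
      simp [Set.indicator_of_mem, Set.indicator_of_notMem, h] <;> ring
  have hint : Integrable ((stopEvent X U V C).indicator
      (fun ω' => f (X ω') - g (X ω'))) P := (hfint.sub hgint).indicator hD
  rw [stopPayoff]
  simp_rw [hpt]
  rw [integral_add hgint hint, integral_indicator hD]

theorem optimal_stopping_set {Ω E : Type*} [MeasurableSpace Ω] [MeasurableSpace E]
    (P : Measure Ω) [IsProbabilityMeasure P]
    (X : Ω → E) (hX : Measurable X)
    (f g : E → ℝ) (hf : Measurable f) (hg : Measurable g)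
    (hfint : Integrable (fun ω => f (X ω)) P) (hgint : Integrable (fun ω => g (X ω)) P)
    (U V : Set Ω) (hU : MeasurableSet U) (hV : MeasurableSet V) (hVU : V ⊆ U) :
    MeasurableSet {x : E | 0 ≤ f x - g x} ∧
      IsGreatest {r : ℝ | ∃ C : Set E, MeasurableSet C ∧ r = stopPayoff P X f g U V C}
        (stopPayoff P X f g U V {x : E | 0 ≤ f x - g x}) := by
  set Cs : Set E := {x : E | 0 ≤ f x - g x} with hCs
  have hCsm : MeasurableSet Cs := measurableSet_le measurable_const (hf.sub hg)
  refine ⟨hCsm, ⟨Cs, hCsm, rfl⟩, ?_⟩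
  rintro r ⟨C, hC, rfl⟩
  set h : Ω → ℝ := fun ω => f (X ω) - g (X ω) with hh
  have hhint : Integrable h P := hfint.sub hgint
  have hUV : MeasurableSet (U \ V) := hU.diff hV
  -- rewrite both payoffs
  rw [stopPayoff_eq P hX hf hg hfint hgint hU hV hC,
    stopPayoff_eq P hX hf hg hfint hgint hU hV hCsm,
    stopEvent_eq hVU C, stopEvent_eq hVU Cs]
  have hAs : X ⁻¹' Cs = {ω | 0 ≤ h ω} := rfl
  have hAsm : MeasurableSet (X ⁻¹' Cs) := hX hCsm
  have hAm : MeasurableSet (X ⁻¹' C) := hX hC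
  have split : ∀ (S : Set Ω), MeasurableSet S →
      ∫ ω in V ∪ S ∩ (U \ V), h ω ∂P
        = (∫ ω in V, h ω ∂P) + ∫ ω in S ∩ (U \ V), h ω ∂P := by
    intro S hS
    refine setIntegral_union ?_ (hS.inter hUV) hhint.integrableOn hhint.integrableOn
    exact Set.disjoint_left.2 fun ω hωV hωS => hωS.2.2 hωV
  rw [split _ hAm, split _ hAsm]
  suffices hs : ∫ ω in X ⁻¹' C ∩ (U \ V), h ω ∂P ≤ ∫ ω in X ⁻¹' Cs ∩ (U \ V), h ω ∂P by linarith
  -- key inequality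
  have step1 : ∫ ω in X ⁻¹' C ∩ (U \ V), h ω ∂P
      ≤ ∫ ω in (X ⁻¹' C ∩ (U \ V)) ∩ X ⁻¹' Cs, h ω ∂P := by
    have hdecomp : ∫ ω in X ⁻¹' C ∩ (U \ V), h ω ∂P
        = (∫ ω in (X ⁻¹' C ∩ (U \ V)) ∩ X ⁻¹' Cs, h ω ∂P)
          + ∫ ω in (X ⁻¹' C ∩ (U \ V)) \ X ⁻¹' Cs, h ω ∂P := by
      have hdisj : Disjoint ((X ⁻¹' C ∩ (U \ V)) ∩ X ⁻¹' Cs)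
          ((X ⁻¹' C ∩ (U \ V)) \ X ⁻¹' Cs) :=
        Set.disjoint_left.2 fun ω hω hω' => hω'.2 hω.2
      rw [← setIntegral_union hdisj
        ((hAm.inter hUV).diff hAsm) hhint.integrableOn hhint.integrableOn,
        Set.inter_union_diff]
    rw [hdecomp]
    have hnonpos : ∫ ω in (X ⁻¹' C ∩ (U \ V)) \ X ⁻¹' Cs, h ω ∂P ≤ 0 := by
      apply setIntegral_nonpos ((hAm.inter hUV).diff hAsm)
      intro ω hω
      have : ¬ (0 ≤ h ω) := hω.2
      linarith
    linarith
  refine step1.trans ?_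
  apply setIntegral_mono_set hhint.integrableOn ?_ ?_
  · refine (ae_restrict_iff' (hAsm.inter hUV)).2 (Filter.Eventually.of_forall fun ω hω => ?_)
    exact hω.1
  · exact Filter.Eventually.of_forall fun ω hω => ⟨hω.2, hω.1.2⟩
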